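/- If M is an invertible column-stochastic matrix (nonnegative entries, columns summing to 1) of size n ≥ 2 with all entries strictly positive, then its inverse M⁻¹ has at least one negative entry. -/
import Mathlib


open Matrix

theorem stmt0 (n : ℕ) (hn : 2 ≤ n) (M : Matrix (Fin n) (Fin n) ℝ)
    (hM : IsUnit M.det)
    (hpos : ∀ i j, 0 < M i j)
    (hcol : ∀ j, ∑ i, M i j = 1) :
    ∃ i j, M⁻¹ i j < 0 := by
  by_contra h
  push_neg at h
  have hinv : M⁻¹ * M = 1 := nonsing_inv_mul M hM
  haveI : Nontrivial (Fin n) := Fin.nontrivial_iff_two_le.mpr hn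
  have hzero : ∀ i k, M⁻¹ i k = 0 := by
    intro i k
    obtain ⟨j, hj⟩ := exists_ne i
    have h0 : (M⁻¹ * M) i j = 0 := by
      rw [hinv, Matrix.one_apply_ne' hj]
    rw [Matrix.mul_apply] at h0
    have hterm := (Finset.sum_eq_zero_iff_of_nonneg (fun k _ =>
      mul_nonneg (h i k) (hpos k j).le)).mp h0 k (Finset.mem_univ k)
    rcases mul_eq_zero.mp hterm with h1 | h1
    · exact h1
    · exact absurd h1 (hpos k j).ne'
  obtain ⟨i⟩ := (inferInstance : Nonempty (Fin n))
  have h1 : (M⁻¹ * M) i i = 1 := by rw [hinv, Matrix.one_apply_eq]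
  rw [Matrix.mul_apply] at h1
  simp [hzero] at h1
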